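/- The formal power series f satisfying f = 1 + x·f + (2^(d-1) − 1)·x·f² with f(0) = 1 is the generating function for the numbers a_d(n+1) of separable d-permutations of [n+1], i.e. the coefficient of x^n in f equals a_d(n+1). -/

import Mathlib

/-- `P` is a `d`-permutation: a sequence of `d` permutations of `[n]`
whose first entry is the identity. -/
def IsDPerm {d n : ℕ} (P : Fin d → Equiv.Perm (Fin n)) : Prop :=
  ∀ h : 0 < d, P ⟨0, h⟩ = 1

/-- Separability of the restriction of the `d` rows `P` to the block of
columns `[a, b)`: either the block consists of a single column, or it can be
split into two consecutive sub-blocks such that in each row all entries of one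
sub-block are smaller than all entries of the other, and both sub-blocks are
themselves separable. -/
inductive SepOn {d : ℕ} (P : Fin d → ℕ → ℕ) : ℕ → ℕ → Prop
  | single (a : ℕ) : SepOn P a (a + 1)
  | split (a l b : ℕ) (h1 : a < l) (h2 : l < b)
      (hmono : ∀ i : Fin d,
        (∀ j1 j2, a ≤ j1 → j1 < l → l ≤ j2 → j2 < b → P i j1 < P i j2) ∨
        (∀ j1 j2, a ≤ j1 → j1 < l → l ≤ j2 → j2 < b → P i j2 < P i j1))
      (hL : SepOn P a l) (hR : SepOn P l b) : SepOn P a b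

/-- The rows of a `d`-permutation, as functions `ℕ → ℕ`. -/
def dPermRows {d n : ℕ} (P : Fin d → Equiv.Perm (Fin n)) : Fin d → ℕ → ℕ :=
  fun i j => if h : j < n then (P i ⟨j, h⟩ : ℕ) else 0

/-- A `d`-permutation of `[n]` is separable if its full block of columns is
recursively separable. -/
def IsSepDPerm {d n : ℕ} (P : Fin d → Equiv.Perm (Fin n)) : Prop :=
  SepOn (dPermRows P) 0 n


namespace SepAux

variable {d : ℕ}

/-- mono-or-antitone comparison between blocks `[a,l)` and `[l,b)` in every row. -/
def IsCut (P : Fin d → ℕ → ℕ) (a l b : ℕ) : Prop :=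
  ∀ i : Fin d,
    (∀ j1 j2, a ≤ j1 → j1 < l → l ≤ j2 → j2 < b → P i j1 < P i j2) ∨
    (∀ j1 j2, a ≤ j1 → j1 < l → l ≤ j2 → j2 < b → P i j2 < P i j1)

/-- directed comparison between blocks, with direction `ε i` per row. -/
def SplitAt (P : Fin d → ℕ → ℕ) (ε : Fin d → Bool) (a l b : ℕ) : Prop :=
  ∀ i j1 j2, a ≤ j1 → j1 < l → l ≤ j2 → j2 < b →
    if ε i = true then P i j1 < P i j2 else P i j2 < P i j1

theorem SplitAt.isCut {P : Fin d → ℕ → ℕ} {ε a l b} (h : SplitAt P ε a l b) :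
    IsCut P a l b := by
  intro i
  cases hε : ε i with
  | true =>
    exact Or.inl fun j1 j2 u1 u2 u3 u4 => by
      have := h i j1 j2 u1 u2 u3 u4; rwa [hε, if_pos rfl] at this
  | false =>
    exact Or.inr fun j1 j2 u1 u2 u3 u4 => by
      have := h i j1 j2 u1 u2 u3 u4; rwa [hε, if_neg (by simp)] at this

theorem _root_.SepOn.lt {P : Fin d → ℕ → ℕ} {a b : ℕ} (h : SepOn P a b) : a < b := by
  induction h with
  | single a => omega
  | split a l b h1 h2 _ _ _ _ _ => omega

theorem _root_.SepOn.exists_cut {P : Fin d → ℕ → ℕ} {a b : ℕ} (h : SepOn P a b) (hb : a + 2 ≤ b) :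
    ∃ l, a < l ∧ l < b ∧ IsCut P a l b := by
  cases h with
  | single a => omega
  | split a l b h1 h2 hmono hL hR => exact ⟨l, h1, h2, hmono⟩

theorem _root_.SepOn.transfer {P : Fin d → ℕ → ℕ} {a b : ℕ} (h : SepOn P a b) :
    ∀ (Q : Fin d → ℕ → ℕ) (a' : ℕ),
      (∀ i j1 j2, a ≤ j1 → j1 < b → a ≤ j2 → j2 < b →
        (P i j1 < P i j2 ↔ Q i (a' + j1 - a) < Q i (a' + j2 - a))) →
      SepOn Q a' (a' + (b - a)) := by
  induction h with
  | single a =>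
    intro Q a' _
    have e : a' + (a + 1 - a) = a' + 1 := by omega
    rw [e]; exact .single a'
  | split a l b h1 h2 hmono hL hR ihL ihR =>
    intro Q a' h
    have hQL := ihL Q a' (fun i j1 j2 u1 u2 u3 u4 => h i j1 j2 u1 (by omega) u3 (by omega))
    have hQR := ihR Q (a' + (l - a)) (fun i j1 j2 u1 u2 u3 u4 => by
      have e1 : a' + (l - a) + j1 - l = a' + j1 - a := by omega
      have e2 : a' + (l - a) + j2 - l = a' + j2 - a := by omega
      rw [e1, e2]; exact h i j1 j2 (by omega) u2 (by omega) u4)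
    have hb : a' + (l - a) + (b - l) = a' + (b - a) := by omega
    rw [hb] at hQR
    refine .split a' (a' + (l - a)) (a' + (b - a)) (by omega) (by omega) ?_ hQL hQR
    intro i
    rcases hmono i with hm | hm
    · left; intro j1 j2 u1 u2 u3 u4
      have hq := (h i (a + (j1 - a')) (a + (j2 - a')) (by omega) (by omega) (by omega)
        (by omega)).mp (hm _ _ (by omega) (by omega) (by omega) (by omega))
      have e1 : a' + (a + (j1 - a')) - a = j1 := by omega
      have e2 : a' + (a + (j2 - a')) - a = j2 := by omega
      rwa [e1, e2] at hq
    · right; intro j1 j2 u1 u2 u3 u4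
      have hq := (h i (a + (j2 - a')) (a + (j1 - a')) (by omega) (by omega) (by omega)
        (by omega)).mp (hm _ _ (by omega) (by omega) (by omega) (by omega))
      have e1 : a' + (a + (j1 - a')) - a = j1 := by omega
      have e2 : a' + (a + (j2 - a')) - a = j2 := by omega
      rwa [e1, e2] at hq

theorem _root_.SepOn.cut {P : Fin d → ℕ → ℕ} {a b : ℕ} (h : SepOn P a b) :
    ∀ c, a < c → c < b → IsCut P a c b → SepOn P a c ∧ SepOn P c b := by
  induction h with
  | single a => intro c h1 h2; omega
  | split a l b h1 h2 hmono hL hR ihL ihR =>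
    intro c hc1 hc2 hcut
    rcases lt_trichotomy c l with hcl | rfl | hlc
    · have hmain := ihL c hc1 hcl (fun i => by
        rcases hcut i with hm | hm
        · exact Or.inl fun j1 j2 u1 u2 u3 u4 => hm j1 j2 u1 u2 u3 (by omega)
        · exact Or.inr fun j1 j2 u1 u2 u3 u4 => hm j1 j2 u1 u2 u3 (by omega))
      refine ⟨hmain.1, .split c l b hcl h2 ?_ hmain.2 hR⟩
      intro i; rcases hmono i with hm | hm
      · exact Or.inl fun j1 j2 u1 u2 u3 u4 => hm j1 j2 (by omega) u2 u3 u4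
      · exact Or.inr fun j1 j2 u1 u2 u3 u4 => hm j1 j2 (by omega) u2 u3 u4
    · exact ⟨hL, hR⟩
    · have hmain := ihR c hlc hc2 (fun i => by
        rcases hcut i with hm | hm
        · exact Or.inl fun j1 j2 u1 u2 u3 u4 => hm j1 j2 (by omega) u2 u3 u4
        · exact Or.inr fun j1 j2 u1 u2 u3 u4 => hm j1 j2 (by omega) u2 u3 u4)
      refine ⟨.split a l c h1 hlc ?_ hL hmain.1, hmain.2⟩
      intro i; rcases hmono i with hm | hm
      · exact Or.inl fun j1 j2 u1 u2 u3 u4 => hm j1 j2 u1 u2 u3 (by omega)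
      · exact Or.inr fun j1 j2 u1 u2 u3 u4 => hm j1 j2 u1 u2 u3 (by omega)

theorem splitAt_unique {P : Fin d → ℕ → ℕ} {ε ε' : Fin d → Bool} {a l l' b : ℕ}
    (h : SplitAt P ε a l b) (h' : SplitAt P ε' a l' b)
    (h1 : a < l) (h2 : l ≤ l') (h3 : l' < b) : ε = ε' := by
  funext i
  have t1 := h i a l' le_rfl h1 (by omega) h3
  have t2 := h' i a l' le_rfl (by omega) le_rfl h3
  cases hε : ε i <;> cases hε' : ε' i <;> rw [hε] at t1 <;> rw [hε'] at t2 <;>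
    simp at t1 t2 <;> omega

end SepAux

namespace SepAux

open Equiv

variable {d : ℕ}

/-- Glue two permutations into one, left block getting small values iff `b = true`. -/
def gfun {k r m : ℕ} (hm : k + r = m) (b : Bool) (σ : Perm (Fin k)) (τ : Perm (Fin r))
    (j : Fin m) : Fin m :=
  if h : (j : ℕ) < k then
    if b then ⟨σ ⟨j, h⟩, by have := (σ ⟨j, h⟩).isLt; omega⟩
    else ⟨(σ ⟨j, h⟩ : ℕ) + r, by have := (σ ⟨j, h⟩).isLt; omega⟩
  else
    have hj : (j : ℕ) - k < r := by have := j.isLt; omega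
    if b then ⟨(τ ⟨(j : ℕ) - k, hj⟩ : ℕ) + k, by have := (τ ⟨(j : ℕ) - k, hj⟩).isLt; omega⟩
    else ⟨(τ ⟨(j : ℕ) - k, hj⟩ : ℕ), by have := (τ ⟨(j : ℕ) - k, hj⟩).isLt; omega⟩

theorem gfun_val_left {k r m : ℕ} (hm : k + r = m) (b : Bool) (σ : Perm (Fin k))
    (τ : Perm (Fin r)) (j : Fin m) (h : (j : ℕ) < k) :
    (gfun hm b σ τ j : ℕ) = (σ ⟨j, h⟩ : ℕ) + if b then 0 else r := by
  unfold gfun; rw [dif_pos h]; cases b <;> simp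

theorem gfun_val_right {k r m : ℕ} (hm : k + r = m) (b : Bool) (σ : Perm (Fin k))
    (τ : Perm (Fin r)) (j : Fin m) (h : ¬ (j : ℕ) < k) (hj : (j : ℕ) - k < r) :
    (gfun hm b σ τ j : ℕ) = (τ ⟨(j : ℕ) - k, hj⟩ : ℕ) + if b then k else 0 := by
  unfold gfun; rw [dif_neg h]; cases b <;> simp

theorem gfun_injective {k r m : ℕ} (hm : k + r = m) (b : Bool) (σ : Perm (Fin k))
    (τ : Perm (Fin r)) : Function.Injective (gfun hm b σ τ) := by
  intro x y hxy
  have hv := congrArg Fin.val hxy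
  by_cases hx : (x : ℕ) < k <;> by_cases hy : (y : ℕ) < k
  · rw [gfun_val_left hm b σ τ x hx, gfun_val_left hm b σ τ y hy] at hv
    have h2 : σ ⟨(x : ℕ), hx⟩ = σ ⟨(y : ℕ), hy⟩ := Fin.ext (by omega)
    have h3 := congrArg Fin.val (σ.injective h2)
    exact Fin.ext (by simpa using h3)
  · exfalso
    have hjy : (y : ℕ) - k < r := by have := y.isLt; omega
    rw [gfun_val_left hm b σ τ x hx, gfun_val_right hm b σ τ y hy hjy] at hv
    have h1 := (σ ⟨(x : ℕ), hx⟩).isLt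
    have h2 := (τ ⟨(y : ℕ) - k, hjy⟩).isLt
    cases b <;> simp at hv <;> omega
  · exfalso
    have hjx : (x : ℕ) - k < r := by have := x.isLt; omega
    rw [gfun_val_left hm b σ τ y hy, gfun_val_right hm b σ τ x hx hjx] at hv
    have h1 := (σ ⟨(y : ℕ), hy⟩).isLt
    have h2 := (τ ⟨(x : ℕ) - k, hjx⟩).isLt
    cases b <;> simp at hv <;> omega
  · have hjx : (x : ℕ) - k < r := by have := x.isLt; omega
    have hjy : (y : ℕ) - k < r := by have := y.isLt; omega
    rw [gfun_val_right hm b σ τ x hx hjx, gfun_val_right hm b σ τ y hy hjy] at hv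
    have h2 : τ ⟨(x : ℕ) - k, hjx⟩ = τ ⟨(y : ℕ) - k, hjy⟩ := Fin.ext (by omega)
    have h3 := congrArg Fin.val (τ.injective h2)
    simp only [] at h3
    exact Fin.ext (by omega)

/-- Glue two permutations into a permutation of the union block. -/
noncomputable def gperm {k r m : ℕ} (hm : k + r = m) (b : Bool) (σ : Perm (Fin k))
    (τ : Perm (Fin r)) : Perm (Fin m) :=
  Equiv.ofBijective _ (Finite.injective_iff_bijective.mp (gfun_injective hm b σ τ))

theorem gperm_val_left {k r m : ℕ} (hm : k + r = m) (b : Bool) (σ : Perm (Fin k))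
    (τ : Perm (Fin r)) (j : Fin m) (h : (j : ℕ) < k) :
    (gperm hm b σ τ j : ℕ) = (σ ⟨j, h⟩ : ℕ) + if b then 0 else r :=
  gfun_val_left hm b σ τ j h

theorem gperm_val_right {k r m : ℕ} (hm : k + r = m) (b : Bool) (σ : Perm (Fin k))
    (τ : Perm (Fin r)) (j : Fin m) (h : ¬ (j : ℕ) < k) (hj : (j : ℕ) - k < r) :
    (gperm hm b σ τ j : ℕ) = (τ ⟨(j : ℕ) - k, hj⟩ : ℕ) + if b then k else 0 :=
  gfun_val_right hm b σ τ j h hj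

/-- Extract a sub-permutation from a block of columns carrying a contiguous block of values. -/
noncomputable def subPerm {m : ℕ} (σ : Perm (Fin m)) (off s voff : ℕ) (hoff : off + s ≤ m)
    (hrange : ∀ j (hj : j < s), voff ≤ (σ ⟨off + j, by omega⟩ : ℕ) ∧
      (σ ⟨off + j, by omega⟩ : ℕ) < voff + s) : Perm (Fin s) :=
  Equiv.ofBijective
    (fun j => ⟨(σ ⟨off + (j : ℕ), by have := j.isLt; omega⟩ : ℕ) - voff, by
      have := (hrange j j.isLt).1; have := (hrange j j.isLt).2; omega⟩)
    (Finite.injective_iff_bijective.mp (by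
      intro x y hxy
      have hx := hrange x x.isLt
      have hy := hrange y y.isLt
      have hv : (σ ⟨off + (x : ℕ), by have := x.isLt; omega⟩ : ℕ) - voff =
          (σ ⟨off + (y : ℕ), by have := y.isLt; omega⟩ : ℕ) - voff := congrArg Fin.val hxy
      have h2 : σ ⟨off + (x : ℕ), by have := x.isLt; omega⟩ =
          σ ⟨off + (y : ℕ), by have := y.isLt; omega⟩ := Fin.ext (by omega)
      have h3 := congrArg Fin.val (σ.injective h2)
      simp only [] at h3
      exact Fin.ext (by omega)))

theorem subPerm_val {m : ℕ} (σ : Perm (Fin m)) (off s voff : ℕ) (hoff : off + s ≤ m)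
    (hrange) (j : Fin s) :
    (subPerm σ off s voff hoff hrange j : ℕ) =
      (σ ⟨off + (j : ℕ), by have := j.isLt; omega⟩ : ℕ) - voff := rfl

/-- In a permutation where the first `k` positions carry values below all
later positions, the first block carries exactly the values `< k`. -/
theorem perm_block_lt {m k : ℕ} (σ : Perm (Fin m)) (hk : k ≤ m)
    (h : ∀ j1 j2 : Fin m, (j1 : ℕ) < k → k ≤ (j2 : ℕ) → σ j1 < σ j2) :
    (∀ j : Fin m, (j : ℕ) < k → (σ j : ℕ) < k) ∧
    (∀ j : Fin m, k ≤ (j : ℕ) → k ≤ (σ j : ℕ)) := by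
  constructor
  · intro j0 hj0
    have hinj : Function.Injective (fun x : Fin (m - k) =>
        (⟨(σ ⟨k + (x : ℕ), by have := x.isLt; omega⟩ : ℕ) - (σ j0 : ℕ) - 1,
          by
            have h1 := h j0 ⟨k + (x : ℕ), by have := x.isLt; omega⟩ hj0 (by simp)
            have h2 := (σ ⟨k + (x : ℕ), by have := x.isLt; omega⟩).isLt
            have h3 := (σ j0).isLt
            omega⟩ : Fin (m - 1 - (σ j0 : ℕ)))) := by
      intro x y hxy
      have hx1 := h j0 ⟨k + (x : ℕ), by have := x.isLt; omega⟩ hj0 (by simp)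
      have hy1 := h j0 ⟨k + (y : ℕ), by have := y.isLt; omega⟩ hj0 (by simp)
      have hv : (σ ⟨k + (x : ℕ), by have := x.isLt; omega⟩ : ℕ) - (σ j0 : ℕ) - 1 =
          (σ ⟨k + (y : ℕ), by have := y.isLt; omega⟩ : ℕ) - (σ j0 : ℕ) - 1 :=
        congrArg Fin.val hxy
      have h2 : σ ⟨k + (x : ℕ), by have := x.isLt; omega⟩ =
          σ ⟨k + (y : ℕ), by have := y.isLt; omega⟩ := Fin.ext (by omega)
      have h3 := congrArg Fin.val (σ.injective h2)
      simp only [] at h3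
      exact Fin.ext (by omega)
    have hcard := Fintype.card_le_of_injective _ hinj
    simp only [Fintype.card_fin] at hcard
    have := (σ j0).isLt
    omega
  · intro j0 hj0
    have hinj : Function.Injective (fun x : Fin k =>
        (⟨(σ ⟨(x : ℕ), by have := x.isLt; omega⟩ : ℕ),
          h ⟨(x : ℕ), by have := x.isLt; omega⟩ j0 x.isLt hj0⟩ : Fin (σ j0 : ℕ))) := by
      intro x y hxy
      have hv := congrArg Fin.val hxy
      dsimp only at hv
      have h2 : σ ⟨(x : ℕ), by have := x.isLt; omega⟩ =
          σ ⟨(y : ℕ), by have := y.isLt; omega⟩ := Fin.ext hv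
      have h3 := congrArg Fin.val (σ.injective h2)
      simp only [] at h3
      exact Fin.ext (by omega)
    have hcard := Fintype.card_le_of_injective _ hinj
    simpa using hcard

end SepAux

namespace SepAux

variable {d : ℕ}

section Block

variable {P A B : Fin d → ℕ → ℕ} {ε : Fin d → Bool} {s r : ℕ}

/-- left-block values of a decomposition of rows `P` at column `s`. -/
def HVal (P A : Fin d → ℕ → ℕ) (ε : Fin d → Bool) (s r : ℕ) : Prop :=
  ∀ i j, j < s → P i j = A i j + (if ε i = true then 0 else r)

def HValB (P B : Fin d → ℕ → ℕ) (ε : Fin d → Bool) (s r : ℕ) : Prop :=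
  ∀ i j, j < r → P i (s + j) = B i j + (if ε i = true then s else 0)

def HBnd (A : Fin d → ℕ → ℕ) (s : ℕ) : Prop := ∀ i j, j < s → A i j < s

def HBndB (B : Fin d → ℕ → ℕ) (r : ℕ) : Prop := ∀ i j, j < r → B i j < r

theorem hhigh_of (hvalB : HValB P B ε s r) (hB : HBndB B r) :
    ∀ i j, s ≤ j → j < s + r → (if ε i = true then s ≤ P i j else P i j < r) := by
  intro i j u1 u2
  have e2 := hvalB i (j - s) (by omega)
  have e2' : s + (j - s) = j := by omega
  rw [e2'] at e2
  have b2 := hB i (j - s) (by omega)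
  cases hε : ε i
  · simp only [hε, eq_self_iff_true, if_true, Bool.false_eq_true, if_false] at e2 ⊢; omega
  · simp only [hε, eq_self_iff_true, if_true, Bool.false_eq_true, if_false] at e2 ⊢; omega

theorem blk_splitAt (hval : HVal P A ε s r) (hvalB : HValB P B ε s r)
    (hA : HBnd A s) (hB : HBndB B r) : SplitAt P ε 0 s (s + r) := by
  intro i j1 j2 u1 u2 u3 u4
  have e1 := hval i j1 u2
  have e2 := hhigh_of hvalB hB i j2 u3 u4
  have b1 := hA i j1 u2
  cases hε : ε i
  · simp only [hε, eq_self_iff_true, if_true, Bool.false_eq_true, if_false] at e1 e2 ⊢; omega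
  · simp only [hε, eq_self_iff_true, if_true, Bool.false_eq_true, if_false] at e1 e2 ⊢; omega

theorem blk_cut_iff (hval : HVal P A ε s r) (hvalB : HValB P B ε s r)
    (hA : HBnd A s) (hB : HBndB B r) (hr : 0 < r)
    {l : ℕ} (hl0 : 0 < l) (hls : l < s) :
    IsCut P 0 l (s + r) ↔ SplitAt A ε 0 l s := by
  have hhigh := hhigh_of hvalB hB
  constructor
  · intro hcut i j1 j2 u1 u2 u3 u4
    have e1 := hval i j1 (by omega)
    have e2 := hval i j2 (by omega)
    have hPs := hhigh i s le_rfl (by omega)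
    have e0 := hval i 0 (by omega)
    have b0 := hA i 0 (by omega)
    rcases hcut i with hm | hm
    · -- increasing cut; must have ε i = true
      have h0s := hm 0 s (by omega) hl0 (by omega) (by omega)
      have hord := hm j1 j2 u1 u2 (by omega) (by omega)
      cases hε : ε i
      · exfalso
        simp only [hε, eq_self_iff_true, if_true, Bool.false_eq_true, if_false] at e0 hPs
        omega
      · simp only [hε, eq_self_iff_true, if_true, Bool.false_eq_true, if_false] at e1 e2 ⊢
        omega
    · -- decreasing cut; must have ε i = false
      have h0s := hm 0 s (by omega) hl0 (by omega) (by omega)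
      have hord := hm j1 j2 u1 u2 (by omega) (by omega)
      cases hε : ε i
      · simp only [hε, eq_self_iff_true, if_true, Bool.false_eq_true, if_false] at e1 e2 ⊢
        omega
      · exfalso
        simp only [hε, eq_self_iff_true, if_true, Bool.false_eq_true, if_false] at e0 hPs
        omega
  · intro hsp i
    cases hε : ε i
    · right; intro j1 j2 u1 u2 u3 u4
      have e1 := hval i j1 (by omega)
      simp only [hε, eq_self_iff_true, if_true, Bool.false_eq_true, if_false] at e1
      by_cases hj2 : j2 < s
      · have hord := hsp i j1 j2 u1 u2 u3 hj2
        have e2 := hval i j2 hj2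
        simp only [hε, eq_self_iff_true, if_true, Bool.false_eq_true, if_false] at hord e2
        omega
      · have hh := hhigh i j2 (by omega) u4
        simp only [hε, eq_self_iff_true, if_true, Bool.false_eq_true, if_false] at hh
        omega
    · left; intro j1 j2 u1 u2 u3 u4
      have e1 := hval i j1 (by omega)
      simp only [hε, eq_self_iff_true, if_true, Bool.false_eq_true, if_false] at e1
      have b1 := hA i j1 (by omega)
      by_cases hj2 : j2 < s
      · have hord := hsp i j1 j2 u1 u2 u3 hj2
        have e2 := hval i j2 hj2
        simp only [hε, eq_self_iff_true, if_true, Bool.false_eq_true, if_false] at hord e2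
        omega
      · have hh := hhigh i j2 (by omega) u4
        simp only [hε, eq_self_iff_true, if_true, Bool.false_eq_true, if_false] at hh
        omega

theorem blk_sep_left (hval : HVal P A ε s r) :
    (SepOn A 0 s → SepOn P 0 s) ∧ (SepOn P 0 s → SepOn A 0 s) := by
  constructor
  · intro h
    have := h.transfer P 0 (fun i j1 j2 u1 u2 u3 u4 => by
      have e1 := hval i j1 u2
      have e2 := hval i j2 u4
      simp only [Nat.zero_add, Nat.sub_zero]
      constructor <;> intro <;> omega)
    simpa using this
  · intro h
    have := h.transfer A 0 (fun i j1 j2 u1 u2 u3 u4 => by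
      have e1 := hval i j1 u2
      have e2 := hval i j2 u4
      simp only [Nat.zero_add, Nat.sub_zero]
      constructor <;> intro <;> omega)
    simpa using this

theorem blk_sep_right (hvalB : HValB P B ε s r) :
    (SepOn B 0 r → SepOn P s (s + r)) ∧ (SepOn P s (s + r) → SepOn B 0 r) := by
  constructor
  · intro h
    have := h.transfer P s (fun i j1 j2 u1 u2 u3 u4 => by
      have e1 := hvalB i j1 u2
      have e2 := hvalB i j2 u4
      have f1 : s + j1 - 0 = s + j1 := by omega
      have f2 : s + j2 - 0 = s + j2 := by omega
      rw [f1, f2, e1, e2]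
      constructor <;> intro <;> omega)
    simpa using this
  · intro h
    have := h.transfer B 0 (fun i j1 j2 u1 u2 u3 u4 => by
      have e1 := hvalB i (j1 - s) (by omega)
      have e2 := hvalB i (j2 - s) (by omega)
      have f1 : s + (j1 - s) = j1 := by omega
      have f2 : s + (j2 - s) = j2 := by omega
      rw [f1] at e1; rw [f2] at e2
      have g1 : 0 + j1 - s = j1 - s := by omega
      have g2 : 0 + j2 - s = j2 - s := by omega
      rw [g1, g2, e1, e2]
      constructor <;> intro <;> omega)
    have e : s + r - s = r := by omega
    rw [e] at this
    simpa using this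

end Block

end SepAux

namespace SepAux

open Equiv

variable {d : ℕ}

def EOK {d : ℕ} (ε : Fin d → Bool) : Prop := ∀ h : 0 < d, ε ⟨0, h⟩ = true

def NoSplit {d s : ℕ} (ε : Fin d → Bool) (A : Fin d → Perm (Fin s)) : Prop :=
  ¬ ∃ l, 0 < l ∧ l < s ∧ SplitAt (dPermRows A) ε 0 l s

theorem rows_bnd {s : ℕ} (X : Fin d → Perm (Fin s)) : HBnd (dPermRows X) s := by
  intro i j hj
  unfold dPermRows
  rw [dif_pos hj]
  exact (X i ⟨j, hj⟩).isLt

noncomputable def gfam {k r m : ℕ} (hm : k + r = m) (ε : Fin d → Bool) (A : Fin d → Perm (Fin k))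
    (B : Fin d → Perm (Fin r)) : Fin d → Perm (Fin m) :=
  fun i => gperm hm (ε i) (A i) (B i)

theorem gfam_hval {k r m : ℕ} (hm : k + r = m) (ε : Fin d → Bool)
    (A : Fin d → Perm (Fin k)) (B : Fin d → Perm (Fin r)) :
    HVal (dPermRows (gfam hm ε A B)) (dPermRows A) ε k r := by
  intro i j hj
  have hjm : j < m := by omega
  unfold dPermRows
  rw [dif_pos hjm, dif_pos hj]
  exact gperm_val_left hm (ε i) (A i) (B i) ⟨j, hjm⟩ hj

theorem gfam_hvalB {k r m : ℕ} (hm : k + r = m) (ε : Fin d → Bool)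
    (A : Fin d → Perm (Fin k)) (B : Fin d → Perm (Fin r)) :
    HValB (dPermRows (gfam hm ε A B)) (dPermRows B) ε k r := by
  intro i j hj
  have hjm : k + j < m := by omega
  unfold dPermRows
  rw [dif_pos hjm, dif_pos hj]
  have h1 : ¬ ((⟨k + j, hjm⟩ : Fin m) : ℕ) < k := by simp
  have h2 : ((⟨k + j, hjm⟩ : Fin m) : ℕ) - k < r := by simp; omega
  have := gperm_val_right hm (ε i) (A i) (B i) ⟨k + j, hjm⟩ h1 h2
  show ((gperm hm (ε i) (A i) (B i)) ⟨k + j, hjm⟩ : ℕ) = _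
  rw [this]
  congr 2
  exact Fin.ext (by simp)

theorem gfam_isDPerm {k r m : ℕ} (hm : k + r = m) (ε : Fin d → Bool)
    (A : Fin d → Perm (Fin k)) (B : Fin d → Perm (Fin r))
    (hε : EOK ε) (hA : IsDPerm A) (hB : IsDPerm B) : IsDPerm (gfam hm ε A B) := by
  intro h
  apply Equiv.ext
  intro j
  apply Fin.ext
  show ((gperm hm (ε ⟨0, h⟩) (A ⟨0, h⟩) (B ⟨0, h⟩)) j : ℕ) = ((1 : Perm (Fin m)) j : ℕ)
  simp only [Perm.one_apply]
  have hεt := hε h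
  by_cases hj : (j : ℕ) < k
  · have hv := gperm_val_left hm (ε ⟨0, h⟩) (A ⟨0, h⟩) (B ⟨0, h⟩) j hj
    have h7 : ((A ⟨0, h⟩) ⟨(j : ℕ), hj⟩ : ℕ) = (j : ℕ) := by rw [hA h]; simp
    have h8 : (if ε ⟨0, h⟩ = true then 0 else r) = 0 := by rw [hεt]; simp
    omega
  · have hjr : (j : ℕ) - k < r := by have := j.isLt; omega
    have hv := gperm_val_right hm (ε ⟨0, h⟩) (A ⟨0, h⟩) (B ⟨0, h⟩) j hj hjr
    have h7 : ((B ⟨0, h⟩) ⟨(j : ℕ) - k, hjr⟩ : ℕ) = (j : ℕ) - k := by rw [hB h]; simp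
    have h8 : (if ε ⟨0, h⟩ = true then k else 0) = k := by rw [hεt]; simp
    have := j.isLt
    omega

theorem gfam_splitAt {k r m : ℕ} (hm : k + r = m) (ε : Fin d → Bool)
    (A : Fin d → Perm (Fin k)) (B : Fin d → Perm (Fin r)) :
    SplitAt (dPermRows (gfam hm ε A B)) ε 0 k m := by
  subst hm
  exact blk_splitAt (gfam_hval rfl ε A B) (gfam_hvalB rfl ε A B) (rows_bnd A) (rows_bnd B)

theorem gfam_isSep {k r m : ℕ} (hm : k + r = m) (ε : Fin d → Bool)
    (A : Fin d → Perm (Fin k)) (B : Fin d → Perm (Fin r))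
    (hk : 0 < k) (hr : 0 < r) (hA : IsSepDPerm A) (hB : IsSepDPerm B) :
    IsSepDPerm (gfam hm ε A B) := by
  subst hm
  show SepOn (dPermRows (gfam rfl ε A B)) 0 (k + r)
  refine SepOn.split 0 k (k + r) hk (by omega) ?_ ?_ ?_
  · exact (gfam_splitAt rfl ε A B).isCut
  · exact (blk_sep_left (gfam_hval rfl ε A B)).1 hA
  · exact (blk_sep_right (gfam_hvalB rfl ε A B)).1 hB

theorem gfam_cut_low {k r m : ℕ} (hm : k + r = m) (ε : Fin d → Bool)
    (A : Fin d → Perm (Fin k)) (B : Fin d → Perm (Fin r))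
    (hr : 0 < r) (hA : NoSplit ε A) :
    ∀ l, 0 < l → l < k → ¬ IsCut (dPermRows (gfam hm ε A B)) 0 l m := by
  subst hm
  intro l hl0 hlk hcut
  exact hA ⟨l, hl0, hlk,
    (blk_cut_iff (gfam_hval rfl ε A B) (gfam_hvalB rfl ε A B) (rows_bnd A) (rows_bnd B)
      hr hl0 hlk).mp hcut⟩

end SepAux

namespace SepAux

open Equiv

variable {d : ℕ}

theorem rows_val {m : ℕ} (P : Fin d → Perm (Fin m)) (i : Fin d) (j : ℕ) (h : j < m) :
    dPermRows P i j = (P i ⟨j, h⟩ : ℕ) := by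
  unfold dPermRows
  rw [dif_pos h]

section Extract

variable {m : ℕ} (P : Fin d → Perm (Fin m)) (ε : Fin d → Bool) (s : ℕ)

theorem ext_range (hs : 0 < s) (hsm : s < m)
    (hsp : SplitAt (dPermRows P) ε 0 s m) :
    ∀ i : Fin d,
      (∀ j (hj : j < s), (if ε i = true then 0 else m - s) ≤ (P i ⟨0 + j, by omega⟩ : ℕ) ∧
        (P i ⟨0 + j, by omega⟩ : ℕ) < (if ε i = true then 0 else m - s) + s) ∧
      (∀ j (hj : j < m - s), (if ε i = true then s else 0) ≤ (P i ⟨s + j, by omega⟩ : ℕ) ∧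
        (P i ⟨s + j, by omega⟩ : ℕ) < (if ε i = true then s else 0) + (m - s)) := by
  intro i
  cases hεi : ε i
  · -- left block carries the large values
    have hblock := perm_block_lt ((P i).trans (Fin.revPerm)) (le_of_lt hsm) (by
      intro j1 j2 h1 h2
      have := hsp i (j1 : ℕ) (j2 : ℕ) (by omega) h1 h2 j2.isLt
      rw [hεi] at this
      simp only [Bool.false_eq_true, if_false] at this
      rw [rows_val P i _ j1.isLt, rows_val P i _ j2.isLt] at this
      simp only [Equiv.trans_apply, Equiv.coe_trans, Function.comp_apply, Fin.revPerm_apply]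
      rw [Fin.lt_def, Fin.val_rev, Fin.val_rev]
      have b1 := (P i j1).isLt
      have b2 := (P i j2).isLt
      simp only [Fin.eta] at this
      omega)
    simp only [hεi, Bool.false_eq_true, if_false]
    constructor
    · intro j hj
      have := hblock.1 ⟨0 + j, by omega⟩ (by simpa using hj)
      simp only [Equiv.trans_apply, Fin.revPerm_apply, Fin.lt_def, Fin.val_rev] at this
      have hb := (P i ⟨0 + j, by omega⟩).isLt
      constructor <;> omega
    · intro j hj
      have := hblock.2 ⟨s + j, by omega⟩ (by simp)
      simp only [Equiv.trans_apply, Fin.revPerm_apply, Fin.val_rev] at this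
      have hb := (P i ⟨s + j, by omega⟩).isLt
      constructor <;> omega
  · -- left block carries the small values
    have hblock := perm_block_lt (P i) (le_of_lt hsm) (by
      intro j1 j2 h1 h2
      have := hsp i (j1 : ℕ) (j2 : ℕ) (by omega) h1 h2 j2.isLt
      rw [hεi] at this
      simp only [if_true] at this
      rw [rows_val P i _ j1.isLt, rows_val P i _ j2.isLt] at this
      rw [Fin.lt_def]
      simp only [Fin.eta] at this
      omega)
    simp only [hεi, if_true]
    constructor
    · intro j hj
      have := hblock.1 ⟨0 + j, by omega⟩ (by simpa using hj)
      constructor <;> omega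
    · intro j hj
      have := hblock.2 ⟨s + j, by omega⟩ (by simp)
      have hb := (P i ⟨s + j, by omega⟩).isLt
      constructor <;> omega

noncomputable def extrA (hs : 0 < s) (hsm : s < m) (hsp : SplitAt (dPermRows P) ε 0 s m) :
    Fin d → Perm (Fin s) :=
  fun i => subPerm (P i) 0 s (if ε i = true then 0 else m - s) (by omega)
    ((ext_range P ε s hs hsm hsp i).1)

noncomputable def extrB (hs : 0 < s) (hsm : s < m) (hsp : SplitAt (dPermRows P) ε 0 s m) :
    Fin d → Perm (Fin (m - s)) :=
  fun i => subPerm (P i) s (m - s) (if ε i = true then s else 0) (by omega)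
    ((ext_range P ε s hs hsm hsp i).2)

theorem extr_hval (hs : 0 < s) (hsm : s < m) (hsp : SplitAt (dPermRows P) ε 0 s m) :
    HVal (dPermRows P) (dPermRows (extrA P ε s hs hsm hsp)) ε s (m - s) := by
  intro i j hj
  have hjm : j < m := by omega
  rw [rows_val P i j hjm, rows_val (extrA P ε s hs hsm hsp) i j hj]
  show (P i ⟨j, hjm⟩ : ℕ) = ((subPerm (P i) 0 s _ (by omega) _) ⟨j, hj⟩ : ℕ) + _
  rw [subPerm_val]
  have hrange := (ext_range P ε s hs hsm hsp i).1 j hj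
  simp only [Fin.val_mk, Nat.zero_add] at hrange ⊢
  omega

theorem extr_hvalB (hs : 0 < s) (hsm : s < m) (hsp : SplitAt (dPermRows P) ε 0 s m) :
    HValB (dPermRows P) (dPermRows (extrB P ε s hs hsm hsp)) ε s (m - s) := by
  intro i j hj
  have hjm : s + j < m := by omega
  rw [rows_val P i _ hjm, rows_val (extrB P ε s hs hsm hsp) i j hj]
  show (P i ⟨s + j, hjm⟩ : ℕ) = ((subPerm (P i) s (m - s) _ (by omega) _) ⟨j, hj⟩ : ℕ) + _
  rw [subPerm_val]
  have hrange := (ext_range P ε s hs hsm hsp i).2 j hj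
  simp only [Fin.val_mk] at hrange ⊢
  omega

theorem extr_isDPerm (hs : 0 < s) (hsm : s < m) (hsp : SplitAt (dPermRows P) ε 0 s m)
    (hP : IsDPerm P) (hε : EOK ε) :
    IsDPerm (extrA P ε s hs hsm hsp) ∧ IsDPerm (extrB P ε s hs hsm hsp) := by
  constructor
  · intro h
    apply Equiv.ext
    intro j
    apply Fin.ext
    show ((subPerm (P ⟨0, h⟩) 0 s _ (by omega) _) j : ℕ) = ((1 : Perm (Fin s)) j : ℕ)
    rw [subPerm_val]
    have h8 : (if ε ⟨0, h⟩ = true then 0 else m - s) = 0 := by rw [hε h]; simp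
    have h9 : ((P ⟨0, h⟩) ⟨0 + (j : ℕ), by have := j.isLt; omega⟩ : ℕ) = 0 + (j : ℕ) := by
      rw [hP h]; simp
    simp only [Perm.one_apply]
    omega
  · intro h
    apply Equiv.ext
    intro j
    apply Fin.ext
    show ((subPerm (P ⟨0, h⟩) s (m - s) _ (by omega) _) j : ℕ) = ((1 : Perm (Fin (m - s))) j : ℕ)
    rw [subPerm_val]
    have h8 : (if ε ⟨0, h⟩ = true then s else 0) = s := by rw [hε h]; simp
    have h9 : ((P ⟨0, h⟩) ⟨s + (j : ℕ), by have := j.isLt; omega⟩ : ℕ) = s + (j : ℕ) := by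
      rw [hP h]; simp
    simp only [Perm.one_apply]
    omega

theorem extr_isSep (hs : 0 < s) (hsm : s < m) (hsp : SplitAt (dPermRows P) ε 0 s m)
    (hL : SepOn (dPermRows P) 0 s) (hR : SepOn (dPermRows P) s m) :
    IsSepDPerm (extrA P ε s hs hsm hsp) ∧ IsSepDPerm (extrB P ε s hs hsm hsp) := by
  have hm : s + (m - s) = m := by omega
  constructor
  · exact (blk_sep_left (extr_hval P ε s hs hsm hsp)).2 hL
  · refine (blk_sep_right (extr_hvalB P ε s hs hsm hsp)).2 ?_
    rw [hm]
    exact hR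

theorem extr_gfam (hs : 0 < s) (hsm : s < m) (hsp : SplitAt (dPermRows P) ε 0 s m) :
    gfam (by omega : s + (m - s) = m) ε (extrA P ε s hs hsm hsp) (extrB P ε s hs hsm hsp) = P := by
  funext i
  apply Equiv.ext
  intro j
  apply Fin.ext
  have hval := extr_hval P ε s hs hsm hsp
  have hvalB := extr_hvalB P ε s hs hsm hsp
  by_cases hj : (j : ℕ) < s
  · have h1 := gperm_val_left (by omega : s + (m - s) = m) (ε i)
      (extrA P ε s hs hsm hsp i) (extrB P ε s hs hsm hsp i) j hj
    have h2 := hval i (j : ℕ) hj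
    rw [rows_val P i _ j.isLt, rows_val _ i _ hj] at h2
    show ((gperm _ (ε i) _ _) j : ℕ) = _
    rw [h1]
    have he : (⟨(j : ℕ), j.isLt⟩ : Fin m) = j := Fin.ext rfl
    rw [he] at h2
    have hb := ((extrA P ε s hs hsm hsp i) ⟨(j : ℕ), hj⟩).isLt
    cases hε : ε i <;> rw [hε] at h2 <;>
      simp only [Bool.false_eq_true, if_false, if_true] at h2 ⊢ <;> omega
  · have hjr : (j : ℕ) - s < m - s := by have := j.isLt; omega
    have h1 := gperm_val_right (by omega : s + (m - s) = m) (ε i)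
      (extrA P ε s hs hsm hsp i) (extrB P ε s hs hsm hsp i) j hj hjr
    have h2 := hvalB i ((j : ℕ) - s) hjr
    have he : s + ((j : ℕ) - s) = (j : ℕ) := by omega
    rw [he] at h2
    rw [rows_val P i _ j.isLt, rows_val _ i _ hjr] at h2
    show ((gperm _ (ε i) _ _) j : ℕ) = _
    rw [h1]
    have he2 : (⟨(j : ℕ), j.isLt⟩ : Fin m) = j := Fin.ext rfl
    rw [he2] at h2
    have hb := ((extrB P ε s hs hsm hsp i) ⟨(j : ℕ) - s, hjr⟩).isLt
    cases hε : ε i <;> rw [hε] at h2 <;>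
      simp only [Bool.false_eq_true, if_false, if_true] at h2 ⊢ <;> omega

end Extract

end SepAux

namespace SepAux

open Equiv

abbrev SepSet (d m : ℕ) := {P : Fin d → Perm (Fin m) // IsDPerm P ∧ IsSepDPerm P}

noncomputable def aCard (d m : ℕ) : ℕ := Nat.card (SepSet d m)

abbrev Dec (d n : ℕ) :=
  Σ _k : Fin (n + 1), Σ ε : {ε : Fin d → Bool // EOK ε},
    ({A : Fin d → Perm (Fin ((_k : ℕ) + 1)) // (IsDPerm A ∧ IsSepDPerm A) ∧ NoSplit ε.1 A} ×
     {B : Fin d → Perm (Fin (n + 2 - ((_k : ℕ) + 1))) // IsDPerm B ∧ IsSepDPerm B})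

variable {d : ℕ}

theorem hmk {n : ℕ} (k : Fin (n + 1)) : ((k : ℕ) + 1) + (n + 2 - ((k : ℕ) + 1)) = n + 2 := by
  have := k.isLt; omega

noncomputable def G {n : ℕ} : Dec d n → SepSet d (n + 2)
  | ⟨k, ε, ⟨A, hA⟩, ⟨B, hB⟩⟩ =>
    ⟨gfam (hmk k) ε.1 A B,
     gfam_isDPerm (hmk k) ε.1 A B ε.2 hA.1.1 hB.1,
     gfam_isSep (hmk k) ε.1 A B (by omega) (by have := k.isLt; omega) hA.1.2 hB.2⟩

theorem G_injective {n : ℕ} : Function.Injective (G (d := d) (n := n)) := by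
  rintro ⟨k1, ε1, ⟨A1, hA1⟩, ⟨B1, hB1⟩⟩ ⟨k2, ε2, ⟨A2, hA2⟩, ⟨B2, hB2⟩⟩ h
  have hP : gfam (hmk k1) ε1.1 A1 B1 = gfam (hmk k2) ε2.1 A2 B2 := congrArg Subtype.val h
  have hrows : dPermRows (gfam (hmk k1) ε1.1 A1 B1) = dPermRows (gfam (hmk k2) ε2.1 A2 B2) := by
    rw [hP]
  -- step 1 : the splitting columns agree
  have hk : k1 = k2 := by
    have c1 : IsCut (dPermRows (gfam (hmk k1) ε1.1 A1 B1)) 0 ((k1 : ℕ) + 1) (n + 2) :=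
      (gfam_splitAt (hmk k1) ε1.1 A1 B1).isCut
    have c2 : IsCut (dPermRows (gfam (hmk k2) ε2.1 A2 B2)) 0 ((k2 : ℕ) + 1) (n + 2) :=
      (gfam_splitAt (hmk k2) ε2.1 A2 B2).isCut
    have l1 := gfam_cut_low (hmk k1) ε1.1 A1 B1 (by have := k1.isLt; omega) hA1.2
    have l2 := gfam_cut_low (hmk k2) ε2.1 A2 B2 (by have := k2.isLt; omega) hA2.2
    rcases lt_trichotomy (k1 : ℕ) (k2 : ℕ) with hlt | heq | hgt
    · exact absurd (hrows ▸ c1) (l2 ((k1 : ℕ) + 1) (by omega) (by omega))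
    · exact Fin.ext heq
    · exact absurd (hrows.symm ▸ c2) (l1 ((k2 : ℕ) + 1) (by omega) (by omega))
  obtain rfl := hk
  -- step 2 : the directions agree
  have hε : ε1 = ε2 := by
    apply Subtype.ext
    funext i
    have e1 := gfam_hval (hmk k1) ε1.1 A1 B1 i 0 (by omega)
    have e2 := gfam_hval (hmk k1) ε2.1 A2 B2 i 0 (by omega)
    have f1 := gfam_hvalB (hmk k1) ε1.1 A1 B1 i 0 (by have := k1.isLt; omega)
    have f2 := gfam_hvalB (hmk k1) ε2.1 A2 B2 i 0 (by have := k1.isLt; omega)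
    rw [hrows] at e1 f1
    have bA1 := rows_bnd A1 i 0 (by omega)
    have bA2 := rows_bnd A2 i 0 (by omega)
    have bB1 := rows_bnd B1 i 0 (by have := k1.isLt; omega)
    have bB2 := rows_bnd B2 i 0 (by have := k1.isLt; omega)
    cases hε1 : ε1.1 i <;> cases hε2 : ε2.1 i <;> rw [hε1] at e1 f1 <;> rw [hε2] at e2 f2 <;>
      simp only [eq_self_iff_true, if_true, Bool.false_eq_true, if_false] at e1 e2 f1 f2 <;>
      first | rfl | (exfalso; omega)
  obtain rfl := hε
  -- step 3 : the left and right parts agree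
  have hA : A1 = A2 := by
    funext i
    apply Equiv.ext
    intro j
    apply Fin.ext
    have e1 := gfam_hval (hmk k1) ε1.1 A1 B1 i (j : ℕ) j.isLt
    have e2 := gfam_hval (hmk k1) ε1.1 A2 B2 i (j : ℕ) j.isLt
    rw [hrows] at e1
    rw [rows_val A1 i (j : ℕ) j.isLt] at e1
    rw [rows_val A2 i (j : ℕ) j.isLt] at e2
    simp only [Fin.eta] at e1 e2
    omega
  have hB : B1 = B2 := by
    funext i
    apply Equiv.ext
    intro j
    apply Fin.ext
    have e1 := gfam_hvalB (hmk k1) ε1.1 A1 B1 i (j : ℕ) j.isLt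
    have e2 := gfam_hvalB (hmk k1) ε1.1 A2 B2 i (j : ℕ) j.isLt
    rw [hrows] at e1
    rw [rows_val B1 i (j : ℕ) j.isLt] at e1
    rw [rows_val B2 i (j : ℕ) j.isLt] at e2
    simp only [Fin.eta] at e1 e2
    omega
  subst hA
  subst hB
  rfl

theorem G_surj_aux {n : ℕ} (P : Fin d → Perm (Fin (n + 2))) (hDP : IsDPerm P)
    (hSep : IsSepDPerm P) (k0 : ℕ) (hk00 : 0 < k0) (hk0m : k0 < n + 2)
    (hcut : IsCut (dPermRows P) 0 k0 (n + 2))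
    (hmin : ∀ l, 0 < l → l < k0 → ¬ IsCut (dPermRows P) 0 l (n + 2)) :
    ∃ x : Dec d n, (G x).1 = P := by
  obtain ⟨k', rfl⟩ : ∃ k', k0 = k' + 1 := ⟨k0 - 1, by omega⟩
  set ε : Fin d → Bool := fun i => decide (dPermRows P i 0 < dPermRows P i (k' + 1)) with hεdef
  have hsp : SplitAt (dPermRows P) ε 0 (k' + 1) (n + 2) := by
    intro i j1 j2 u1 u2 u3 u4
    rcases hcut i with hm | hm
    · have h0 := hm 0 (k' + 1) (by omega) (by omega) (by omega) (by omega)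
      have hd : ε i = true := by rw [hεdef]; simp only [decide_eq_true_eq]; exact h0
      rw [hd, if_pos rfl]
      exact hm j1 j2 u1 u2 u3 u4
    · have h0 := hm 0 (k' + 1) (by omega) (by omega) (by omega) (by omega)
      have hd : ε i = false := by
        rw [hεdef]; simp only [decide_eq_false_iff_not]; omega
      rw [hd, if_neg Bool.false_ne_true]
      exact hm j1 j2 u1 u2 u3 u4
  have hEOK : EOK ε := by
    intro h
    have r0 := rows_val P ⟨0, h⟩ 0 (by omega)
    have rk := rows_val P ⟨0, h⟩ (k' + 1) (by omega)
    rw [hDP h] at r0 rk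
    simp only [Perm.one_apply] at r0 rk
    rw [hεdef]
    simp only [decide_eq_true_eq]
    omega
  have hcut2 := hSep.cut (k' + 1) hk00 hk0m hcut
  set A := extrA P ε (k' + 1) hk00 hk0m hsp with hAdef
  set B := extrB P ε (k' + 1) hk00 hk0m hsp with hBdef
  have hDPs := extr_isDPerm P ε (k' + 1) hk00 hk0m hsp hDP hEOK
  have hSeps := extr_isSep P ε (k' + 1) hk00 hk0m hsp hcut2.1 hcut2.2
  have hNoSplit : NoSplit ε A := by
    rintro ⟨l, hl0, hlk, hspl⟩
    have hiff := blk_cut_iff (extr_hval P ε (k' + 1) hk00 hk0m hsp)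
      (extr_hvalB P ε (k' + 1) hk00 hk0m hsp) (rows_bnd A) (rows_bnd B)
      (by omega : 0 < (n + 2) - (k' + 1)) hl0 hlk
    have hcl := hiff.mpr hspl
    have he : (k' + 1) + ((n + 2) - (k' + 1)) = n + 2 := by omega
    rw [he] at hcl
    exact hmin l hl0 (by omega) hcl
  refine ⟨⟨⟨k', by omega⟩, ⟨ε, hEOK⟩, ⟨A, ⟨hDPs.1, hSeps.1⟩, hNoSplit⟩, ⟨B, hDPs.2, hSeps.2⟩⟩, ?_⟩
  show gfam _ ε A B = P
  exact extr_gfam P ε (k' + 1) hk00 hk0m hsp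

theorem G_surjective {n : ℕ} : Function.Surjective (G (d := d) (n := n)) := by
  classical
  rintro ⟨P, hDP, hSep⟩
  have hsep : SepOn (dPermRows P) 0 (n + 2) := hSep
  have hex : ∃ l, 0 < l ∧ l < n + 2 ∧ IsCut (dPermRows P) 0 l (n + 2) := by
    obtain ⟨l, h1, h2, h3⟩ := hsep.exists_cut (by omega)
    exact ⟨l, by omega, h2, h3⟩
  obtain ⟨x, hx⟩ := G_surj_aux P hDP hSep (Nat.find hex) (Nat.find_spec hex).1
    (Nat.find_spec hex).2.1 (Nat.find_spec hex).2.2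
    (fun l hl0 hlk hc => Nat.find_min hex hlk ⟨hl0, by have := (Nat.find_spec hex).2.1; omega, hc⟩)
  exact ⟨x, Subtype.ext hx⟩

theorem card_eq_dec (n : ℕ) : aCard d (n + 2) = Nat.card (Dec d n) :=
  (Nat.card_congr (Equiv.ofBijective G ⟨G_injective, G_surjective⟩)).symm

end SepAux

namespace SepAux

open Equiv Finset

open scoped Classical

variable {d : ℕ}

noncomputable def bCard (d s : ℕ) (ε : Fin d → Bool) : ℕ :=
  Nat.card {A : Fin d → Perm (Fin s) // (IsDPerm A ∧ IsSepDPerm A) ∧ NoSplit ε A}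

theorem perm_one_eq {s : ℕ} [Subsingleton (Fin s)] (σ : Perm (Fin s)) : σ = 1 :=
  Equiv.ext fun x => Subsingleton.elim _ _

theorem sep_one (A : Fin d → Perm (Fin 1)) : IsDPerm A ∧ IsSepDPerm A :=
  ⟨fun h => perm_one_eq _, SepOn.single 0⟩

theorem aCard_one : aCard d 1 = 1 := by
  have : ∀ x y : SepSet d 1, x = y := by
    rintro ⟨A, _⟩ ⟨B, _⟩
    exact Subtype.ext (funext fun i => (perm_one_eq (A i)).trans (perm_one_eq (B i)).symm)
  haveI : Subsingleton (SepSet d 1) := ⟨this⟩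
  haveI : Nonempty (SepSet d 1) := ⟨⟨fun _ => 1, sep_one _⟩⟩
  exact Nat.card_unique

theorem bCard_one (ε : Fin d → Bool) : bCard d 1 ε = 1 := by
  have hns : ∀ A : Fin d → Perm (Fin 1), NoSplit ε A := by
    rintro A ⟨l, h1, h2, _⟩; omega
  have : ∀ x y : {A : Fin d → Perm (Fin 1) // (IsDPerm A ∧ IsSepDPerm A) ∧ NoSplit ε A},
      x = y := by
    rintro ⟨A, _⟩ ⟨B, _⟩
    exact Subtype.ext (funext fun i => (perm_one_eq (A i)).trans (perm_one_eq (B i)).symm)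
  haveI : Subsingleton {A : Fin d → Perm (Fin 1) // (IsDPerm A ∧ IsSepDPerm A) ∧ NoSplit ε A} :=
    ⟨this⟩
  haveI : Nonempty {A : Fin d → Perm (Fin 1) // (IsDPerm A ∧ IsSepDPerm A) ∧ NoSplit ε A} :=
    ⟨⟨fun _ => 1, sep_one _, hns _⟩⟩
  exact Nat.card_unique

theorem cardE (hd : 0 < d) :
    Fintype.card {ε : Fin d → Bool // EOK ε} = 2 ^ (d - 1) := by
  have e : {ε : Fin d → Bool // EOK ε} ≃ ({j : Fin d // j ≠ ⟨0, hd⟩} → Bool) :=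
    { toFun := fun ε j => ε.1 j.1
      invFun := fun g => ⟨fun j => if h : j = ⟨0, hd⟩ then true else g ⟨j, h⟩,
        fun h' => by simp⟩
      left_inv := fun ε => by
        apply Subtype.ext
        funext j
        show (if h : j = ⟨0, hd⟩ then true else ε.1 j) = ε.1 j
        by_cases h : j = ⟨0, hd⟩
        · rw [dif_pos h, h, ε.2 hd]
        · rw [dif_neg h]
      right_inv := fun g => by
        funext j
        show (if h : j.1 = ⟨0, hd⟩ then true else g ⟨j.1, h⟩) = g j
        rw [dif_neg j.2] }
  rw [Fintype.card_congr e, Fintype.card_fun]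
  congr 1
  rw [Fintype.card_subtype_compl]
  simp [Fintype.card_subtype_eq]

/-- every separable d-permutation of size ≥ 2 admits a directed split. -/
theorem exists_split {s : ℕ} (hs : 2 ≤ s) (A : Fin d → Perm (Fin s))
    (hA : IsDPerm A ∧ IsSepDPerm A) :
    ∃ ε : {ε : Fin d → Bool // EOK ε}, ¬ NoSplit ε.1 A := by
  have hsep : SepOn (dPermRows A) 0 s := hA.2
  obtain ⟨l, h1, h2, hcut⟩ := hsep.exists_cut (by omega)
  set ε : Fin d → Bool := fun i => decide (dPermRows A i 0 < dPermRows A i l) with hεdef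
  have hsp : SplitAt (dPermRows A) ε 0 l s := by
    intro i j1 j2 u1 u2 u3 u4
    rcases hcut i with hm | hm
    · have h0 := hm 0 l (by omega) (by omega) (by omega) (by omega)
      have hdd : ε i = true := by rw [hεdef]; simp only [decide_eq_true_eq]; exact h0
      rw [hdd, if_pos rfl]
      exact hm j1 j2 u1 u2 u3 u4
    · have h0 := hm 0 l (by omega) (by omega) (by omega) (by omega)
      have hdd : ε i = false := by rw [hεdef]; simp only [decide_eq_false_iff_not]; omega
      rw [hdd, if_neg Bool.false_ne_true]
      exact hm j1 j2 u1 u2 u3 u4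
  have hEOK : EOK ε := by
    intro h
    have r0 := rows_val A ⟨0, h⟩ 0 (by omega)
    have rk := rows_val A ⟨0, h⟩ l (by omega)
    rw [hA.1 h] at r0 rk
    simp only [Perm.one_apply] at r0 rk
    rw [hεdef]
    simp only [decide_eq_true_eq]
    omega
  exact ⟨⟨ε, hEOK⟩, fun hn => hn ⟨l, h1, h2, hsp⟩⟩

/-- the direction of any split of a given d-permutation is unique. -/
theorem split_dir_unique {s : ℕ} (A : Fin d → Perm (Fin s)) {ε ε' : Fin d → Bool}
    (h : ¬ NoSplit ε A) (h' : ¬ NoSplit ε' A) : ε = ε' := by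
  rw [NoSplit, not_not] at h h'
  obtain ⟨l, hl0, hls, hsp⟩ := h
  obtain ⟨l', hl0', hls', hsp'⟩ := h'
  rcases le_total l l' with hle | hle
  · exact splitAt_unique hsp hsp' hl0 hle hls'
  · exact (splitAt_unique hsp' hsp hl0' hle hls).symm

theorem sum_bCard (hd : 0 < d) {s : ℕ} (hs : 2 ≤ s) :
    ∑ ε : {ε : Fin d → Bool // EOK ε}, bCard d s ε.1 = (2 ^ (d - 1) - 1) * aCard d s := by
  have h1 : ∀ ε : {ε : Fin d → Bool // EOK ε}, bCard d s ε.1 =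
      (Finset.univ.filter
        (fun A : Fin d → Perm (Fin s) => (IsDPerm A ∧ IsSepDPerm A) ∧ NoSplit ε.1 A)).card := by
    intro ε
    rw [bCard, Nat.card_eq_fintype_card, Fintype.card_subtype]
  rw [Finset.sum_congr rfl (fun ε _ => h1 ε)]
  simp only [Finset.card_filter]
  rw [Finset.sum_comm]
  have h2 : ∀ A : Fin d → Perm (Fin s),
      (∑ ε : {ε : Fin d → Bool // EOK ε},
        if (IsDPerm A ∧ IsSepDPerm A) ∧ NoSplit ε.1 A then 1 else 0) =
      if IsDPerm A ∧ IsSepDPerm A then 2 ^ (d - 1) - 1 else 0 := by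
    intro A
    by_cases hA : IsDPerm A ∧ IsSepDPerm A
    · rw [if_pos hA]
      obtain ⟨δ, hδ⟩ := exists_split hs A hA
      have hsum : (∑ ε : {ε : Fin d → Bool // EOK ε},
          if (IsDPerm A ∧ IsSepDPerm A) ∧ NoSplit ε.1 A then 1 else 0) =
          (Finset.univ.filter (fun ε : {ε : Fin d → Bool // EOK ε} =>
            NoSplit ε.1 A)).card := by
        rw [Finset.card_filter]
        refine Finset.sum_congr rfl (fun ε _ => ?_)
        by_cases hN : NoSplit ε.1 A
        · rw [if_pos ⟨hA, hN⟩, if_pos hN]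
        · rw [if_neg (fun hc => hN hc.2), if_neg hN]
      rw [hsum]
      have hcompl : Finset.univ.filter (fun ε : {ε : Fin d → Bool // EOK ε} =>
          ¬ NoSplit ε.1 A) = {δ} := by
        apply Finset.eq_singleton_iff_unique_mem.mpr
        constructor
        · simp only [Finset.mem_filter, Finset.mem_univ, true_and]
          exact hδ
        · intro ε hε
          simp only [Finset.mem_filter, Finset.mem_univ, true_and] at hε
          exact Subtype.ext (split_dir_unique A hε hδ)
      have := Finset.card_filter_add_card_filter_not
        (s := (Finset.univ : Finset {ε : Fin d → Bool // EOK ε}))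
        (p := fun ε => NoSplit ε.1 A)
      rw [hcompl] at this
      simp only [Finset.card_singleton, Finset.card_univ] at this
      rw [cardE hd] at this
      omega
    · rw [if_neg hA]
      refine Finset.sum_eq_zero (fun ε _ => ?_)
      rw [if_neg (fun hc => hA hc.1)]
  rw [Finset.sum_congr rfl (fun A _ => h2 A)]
  rw [← Finset.sum_filter]
  rw [Finset.sum_const, smul_eq_mul]
  rw [mul_comm]
  congr 1
  rw [aCard, Nat.card_eq_fintype_card, Fintype.card_subtype]

theorem card_dec_eq (n : ℕ) :
    Nat.card (Dec d n) = ∑ k : Fin (n + 1),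
      (∑ ε : {ε : Fin d → Bool // EOK ε}, bCard d ((k : ℕ) + 1) ε.1) *
        aCard d (n + 2 - ((k : ℕ) + 1)) := by
  rw [Nat.card_eq_fintype_card, Fintype.card_sigma]
  refine Finset.sum_congr rfl (fun k _ => ?_)
  rw [Fintype.card_sigma, Finset.sum_mul]
  refine Finset.sum_congr rfl (fun ε _ => ?_)
  rw [Fintype.card_prod]
  congr 1
  · rw [bCard, Nat.card_eq_fintype_card]
  · rw [aCard, Nat.card_eq_fintype_card]

theorem aCard_rec (hd : 0 < d) (n : ℕ) :
    aCard d (n + 2) = aCard d (n + 1) +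
      (2 ^ (d - 1) - 1) *
        ∑ p ∈ Finset.HasAntidiagonal.antidiagonal n, aCard d (p.1 + 1) * aCard d (p.2 + 1) := by
  have hpow : 1 ≤ 2 ^ (d - 1) := Nat.one_le_two_pow
  rw [card_eq_dec, card_dec_eq]
  rw [Fin.sum_univ_eq_sum_range (fun k =>
    (∑ ε : {ε : Fin d → Bool // EOK ε}, bCard d (k + 1) ε.1) * aCard d (n + 2 - (k + 1)))]
  rw [Finset.Nat.sum_antidiagonal_eq_sum_range_succ_mk
    (fun p => aCard d (p.1 + 1) * aCard d (p.2 + 1))]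
  rw [Finset.sum_range_succ' (fun k =>
    (∑ ε : {ε : Fin d → Bool // EOK ε}, bCard d (k + 1) ε.1) * aCard d (n + 2 - (k + 1)))]
  rw [Finset.sum_range_succ' (fun k => aCard d (k + 1) * aCard d (n - k + 1))]
  -- the k = 0 terms
  have ht0 : (∑ ε : {ε : Fin d → Bool // EOK ε}, bCard d (0 + 1) ε.1) *
      aCard d (n + 2 - (0 + 1)) = 2 ^ (d - 1) * aCard d (n + 1) := by
    have : ∀ ε : {ε : Fin d → Bool // EOK ε}, bCard d (0 + 1) ε.1 = 1 :=
      fun ε => bCard_one ε.1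
    rw [Finset.sum_congr rfl (fun ε _ => this ε), Finset.sum_const, smul_eq_mul, mul_one,
      Finset.card_univ, cardE hd]
    congr 1
  have ht1 : aCard d (0 + 1) * aCard d (n - 0 + 1) = aCard d (n + 1) := by
    rw [aCard_one]
    simp
  rw [ht0, ht1]
  have hterm : ∀ i, i < n →
      ((∑ ε : {ε : Fin d → Bool // EOK ε}, bCard d ((i + 1) + 1) ε.1) *
        aCard d (n + 2 - ((i + 1) + 1)) =
       (2 ^ (d - 1) - 1) * (aCard d ((i + 1) + 1) * aCard d ((n - (i + 1)) + 1))) := by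
    intro i hi
    rw [sum_bCard hd (by omega)]
    have he : n + 2 - ((i + 1) + 1) = (n - (i + 1)) + 1 := by omega
    rw [he, mul_assoc]
  rw [Finset.sum_congr rfl (fun i hi => hterm i (Finset.mem_range.mp hi))]
  rw [← Finset.mul_sum]
  obtain ⟨c, hc⟩ := Nat.exists_eq_add_of_le hpow
  rw [hc]
  simp only [Nat.add_sub_cancel_left]
  ring

end SepAux

open PowerSeries in
/-- The power series `f` with `f = 1 + x f + (2^(d-1)-1) x f²`, `f(0) = 1`, is the
generating function of the numbers of separable d-permutations of `[n+1]`. -/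
theorem sep_dPerm_gf (d : ℕ) (hd : 1 ≤ d) (f : PowerSeries ℚ)
    (hf0 : constantCoeff f = 1)
    (hf : f = 1 + X * f + (((2 ^ (d - 1) - 1 : ℕ) : PowerSeries ℚ)) * X * f ^ 2) :
    ∀ n : ℕ, coeff n f =
      Nat.card {P : Fin d → Equiv.Perm (Fin (n + 1)) // IsDPerm P ∧ IsSepDPerm P} := by
  intro n
  induction n using Nat.strong_induction_on with
  | _ n ih =>
    rcases n with _ | n
    · show coeff 0 f = ((SepAux.aCard d 1 : ℕ) : ℚ)
      rw [SepAux.aCard_one]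
      rw [PowerSeries.coeff_zero_eq_constantCoeff]
      rw [hf0]
      norm_num
    · show coeff (n + 1) f = ((SepAux.aCard d (n + 2) : ℕ) : ℚ)
      have hco := congrArg (coeff (n + 1)) hf
      have hcast : (((2 ^ (d - 1) - 1 : ℕ) : PowerSeries ℚ)) =
          C ((2 ^ (d - 1) - 1 : ℕ) : ℚ) := (map_natCast C _).symm
      rw [map_add, map_add, PowerSeries.coeff_one, PowerSeries.coeff_succ_X_mul, hcast,
        mul_assoc, PowerSeries.coeff_C_mul, PowerSeries.coeff_succ_X_mul, sq,
        PowerSeries.coeff_mul, if_neg (Nat.succ_ne_zero n)] at hco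
      have hsum : ∑ p ∈ Finset.HasAntidiagonal.antidiagonal n, coeff p.1 f * coeff p.2 f =
          ∑ p ∈ Finset.HasAntidiagonal.antidiagonal n,
            ((SepAux.aCard d (p.1 + 1) : ℚ) * (SepAux.aCard d (p.2 + 1) : ℚ)) := by
        refine Finset.sum_congr rfl (fun p hp => ?_)
        have h1 : p.1 ≤ n := Finset.HasAntidiagonal.antidiagonal.fst_le hp
        have h2 : p.2 ≤ n := Finset.HasAntidiagonal.antidiagonal.snd_le hp
        rw [ih p.1 (by omega), ih p.2 (by omega)]
        rfl
      have hn : coeff n f = ((SepAux.aCard d (n + 1) : ℕ) : ℚ) := ih n (by omega)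
      rw [hco, hsum, hn]
      have key := SepAux.aCard_rec (show 0 < d by omega) n
      rw [key]
      push_cast
      ring
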